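/- Let d ≥ 2 be an integer and let v = (v_1, …, v_d) ∈ ℝ^d. There exists a constant C (depending on d and v) such that for every integer M ≥ 1: | Σ_{(k_1,…,k_d) ∈ ℤ_{≥0}^d, k_1+⋯+k_d=M} exp((1/M)·Σ_{j=1}^d k_j v_j) − M^{d−1} · J | ≤ C · M^{d−2}, where J = ∫_{x ∈ ℝ_{≥0}^{d−1}, x_1+⋯+x_{d−1} ≤ 1} exp(Σ_{j=1}^{d−1} x_j v_j + (1 − x_1 − ⋯ − x_{d−1}) v_d) dx (the integral being with respect to (d−1)-dimensional Lebesgue measure on the standard simplex). -/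

import Mathlib

open MeasureTheory Set Real Pointwise

private lemma oneD_closed {w : ℝ} (hw : w ≠ 0) (a b : ℝ) (hab : a ≤ b) :
    ∫ t in Set.Ico a b, Real.exp (t * w) = (Real.exp (b * w) - Real.exp (a * w)) / w := by
  rw [integral_Ico_eq_integral_Ioo, ← integral_Ioc_eq_integral_Ioo,
    ← intervalIntegral.integral_of_le hab, intervalIntegral.integral_comp_mul_right _ hw,
    integral_exp, smul_eq_mul]
  ring

private lemma oneD_trans (w a h : ℝ) (hh : 0 ≤ h) :
    ∫ t in Set.Ico a (a + h), Real.exp (t * w)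
      = Real.exp (a * w) * ∫ t in Set.Ico 0 h, Real.exp (t * w) := by
  by_cases hw : w = 0
  · simp [hw, Real.volume_Ico]
  · rw [oneD_closed hw a (a + h) (by linarith), oneD_closed hw 0 h hh]
    rw [show (a + h) * w = a * w + h * w by ring, Real.exp_add, zero_mul, Real.exp_zero]
    field_simp

open MeasureTheory Set Real Pointwise

private noncomputable def gfun {n : ℕ} (u : Fin n → ℝ) : (Fin n → ℝ) → ℝ := fun x => Real.exp (∑ j, x j * u j)

private def simp0 (n : ℕ) (s : ℝ) : Set (Fin n → ℝ) := {x | (∀ j, 0 ≤ x j) ∧ ∑ j, x j ≤ s}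

private def Tset (n M : ℕ) : Finset (Fin n → ℕ) :=
  (Fintype.piFinset fun _ => Finset.range (M + 1)).filter (fun k => ∑ j, k j ≤ M)

private def boxk {n : ℕ} (M : ℕ) (k : Fin n → ℕ) : Set (Fin n → ℝ) :=
  Set.univ.pi fun j => Set.Ico ((k j : ℝ) / M) (((k j : ℝ) + 1) / M)

private lemma gfun_cont {n : ℕ} (u : Fin n → ℝ) : Continuous (gfun u) := by
  apply Real.continuous_exp.comp
  exact continuous_finset_sum _ fun j _ => (continuous_apply j).mul continuous_const

private lemma measurable_simp0 (n : ℕ) (s : ℝ) : MeasurableSet (simp0 n s) := by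
  have h1 : MeasurableSet {x : Fin n → ℝ | ∀ j, 0 ≤ x j} := by
    rw [show {x : Fin n → ℝ | ∀ j, 0 ≤ x j} = ⋂ j, {x | 0 ≤ x j} by ext x; simp]
    exact MeasurableSet.iInter fun j => measurableSet_le measurable_const (measurable_pi_apply j)
  have h2 : MeasurableSet {x : Fin n → ℝ | ∑ j, x j ≤ s} :=
    measurableSet_le (by fun_prop) measurable_const
  exact h1.inter h2

private lemma measurable_boxk {n : ℕ} (M : ℕ) (k : Fin n → ℕ) : MeasurableSet (boxk M k) :=
  MeasurableSet.univ_pi fun j => measurableSet_Ico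

private lemma box_integral {n : ℕ} (u : Fin n → ℝ) {M : ℕ} (hM : 1 ≤ M) (k : Fin n → ℕ) :
    ∫ x in boxk M k, gfun u x
      = gfun u (fun j => (k j : ℝ) / M) * ∏ j, ∫ t in Set.Ico (0:ℝ) (1 / M), Real.exp (t * u j) := by
  have hM0 : (0:ℝ) < M := by exact_mod_cast hM
  have key : ∫ x in boxk M k, gfun u x
      = ∏ j, ∫ t in Set.Ico ((k j : ℝ) / M) (((k j : ℝ) + 1) / M), Real.exp (t * u j) := by
    rw [← integral_indicator (measurable_boxk M k)]
    have hpt : ∀ x : Fin n → ℝ, (boxk M k).indicator (gfun u) x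
        = ∏ j, (Set.Ico ((k j : ℝ) / M) (((k j : ℝ) + 1) / M)).indicator
            (fun t => Real.exp (t * u j)) (x j) := by
      intro x
      by_cases hx : x ∈ boxk M k
      · rw [Set.indicator_of_mem hx]
        have : ∀ j, x j ∈ Set.Ico ((k j : ℝ) / M) (((k j : ℝ) + 1) / M) := by
          intro j; exact hx j (Set.mem_univ j)
        rw [gfun, Real.exp_sum]
        exact Finset.prod_congr rfl fun j _ =>
          (Set.indicator_of_mem (this j) (fun t => Real.exp (t * u j))).symm
      · rw [Set.indicator_of_notMem hx]
        rw [boxk, Set.mem_pi] at hx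
        push_neg at hx
        obtain ⟨j, -, hj⟩ := hx
        exact (Finset.prod_eq_zero (Finset.mem_univ j)
          (Set.indicator_of_notMem hj (fun t => Real.exp (t * u j)))).symm
    simp_rw [hpt]
    rw [volume_pi, MeasureTheory.integral_fintype_prod_eq_prod
      (fun j => (Set.Ico ((k j : ℝ) / M) (((k j : ℝ) + 1) / M)).indicator
        (fun t => Real.exp (t * u j)))]
    exact Finset.prod_congr rfl fun j _ => integral_indicator measurableSet_Ico
  rw [key]
  have : ∀ j, ∫ t in Set.Ico ((k j : ℝ) / M) (((k j : ℝ) + 1) / M), Real.exp (t * u j)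
      = Real.exp ((k j : ℝ) / M * u j) * ∫ t in Set.Ico (0:ℝ) (1 / M), Real.exp (t * u j) := by
    intro j
    have h1 : ((k j : ℝ) + 1) / M = (k j : ℝ) / M + 1 / M := by field_simp
    rw [h1, oneD_trans (u j) ((k j : ℝ) / M) (1 / M) (by positivity)]
  simp_rw [this]
  rw [Finset.prod_mul_distrib, gfun, Real.exp_sum]

private lemma boxk_disjoint {n : ℕ} {M : ℕ} (hM : 1 ≤ M) :
    (↑(Tset n M) : Set (Fin n → ℕ)).Pairwise (Function.onFun Disjoint (boxk (n := n) M)) := by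
  have hM0 : (0:ℝ) < M := by exact_mod_cast hM
  intro k _ k' _ hkk'
  rw [Function.onFun, Set.disjoint_left]
  rintro x hx hx'
  apply hkk'
  funext j
  have h1 := hx j (Set.mem_univ j)
  have h2 := hx' j (Set.mem_univ j)
  have e1 : ((k j : ℝ)) / M < ((k' j : ℝ) + 1) / M := lt_of_le_of_lt h1.1 h2.2
  have e2 : ((k' j : ℝ)) / M < ((k j : ℝ) + 1) / M := lt_of_le_of_lt h2.1 h1.2
  rw [div_lt_div_iff₀ hM0 hM0] at e1 e2
  have f1 : (k j : ℝ) < (k' j : ℝ) + 1 := by nlinarith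
  have f2 : (k' j : ℝ) < (k j : ℝ) + 1 := by nlinarith
  have : k j < k' j + 1 := by exact_mod_cast f1
  have : k' j < k j + 1 := by exact_mod_cast f2
  omega

private lemma simplex_subset_union {n : ℕ} {M : ℕ} (hM : 1 ≤ M) :
    simp0 n 1 ⊆ ⋃ k ∈ Tset n M, boxk M k := by
  have hM0 : (0:ℝ) < M := by exact_mod_cast hM
  intro x hx
  obtain ⟨hx0, hx1⟩ := hx
  set k : Fin n → ℕ := fun j => ⌊(M : ℝ) * x j⌋₊ with hk
  have hxj1 : ∀ j, x j ≤ 1 := by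
    intro j
    calc x j ≤ ∑ i, x i := Finset.single_le_sum (fun i _ => hx0 i) (Finset.mem_univ j)
    _ ≤ 1 := hx1
  have hfl : ∀ j, ((k j : ℝ)) ≤ (M : ℝ) * x j := fun j =>
    Nat.floor_le (mul_nonneg (le_of_lt hM0) (hx0 j))
  have hfu : ∀ j, (M : ℝ) * x j < (k j : ℝ) + 1 := fun j => Nat.lt_floor_add_one _
  have hmem : k ∈ Tset n M := by
    rw [Tset, Finset.mem_filter, Fintype.mem_piFinset]
    constructor
    · intro j
      rw [Finset.mem_range]
      have : ((k j : ℝ)) ≤ (M : ℝ) := le_trans (hfl j) (by nlinarith [hxj1 j])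
      have : k j ≤ M := by exact_mod_cast this
      omega
    · have hc : ((∑ j, k j : ℕ) : ℝ) ≤ (M : ℝ) := by
        push_cast
        calc ∑ j, ((k j : ℝ)) ≤ ∑ j, (M : ℝ) * x j := Finset.sum_le_sum fun j _ => hfl j
        _ = (M : ℝ) * ∑ j, x j := by rw [Finset.mul_sum]
        _ ≤ (M : ℝ) * 1 := by nlinarith
        _ = (M : ℝ) := by ring
      exact_mod_cast hc
  refine Set.mem_biUnion hmem ?_
  intro j _
  refine ⟨?_, ?_⟩
  · rw [div_le_iff₀ hM0]
    linarith [hfl j]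
  · rw [lt_div_iff₀ hM0]
    linarith [hfu j]

private lemma union_sub {n : ℕ} {M : ℕ} (hM : 1 ≤ M) :
    (⋃ k ∈ Tset n M, boxk M k) ⊆ simp0 n (1 + n / M) := by
  have hM0 : (0:ℝ) < M := by exact_mod_cast hM
  intro x hx
  obtain ⟨k, hk, hxk⟩ := Set.mem_iUnion₂.mp hx
  rw [Tset, Finset.mem_filter] at hk
  constructor
  · intro j
    have := (hxk j (Set.mem_univ j)).1
    have : (0:ℝ) ≤ (k j : ℝ) / M := by positivity
    linarith [(hxk j (Set.mem_univ j)).1]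
  · have hsum : ∀ j, x j ≤ ((k j : ℝ) + 1) / M := fun j => le_of_lt (hxk j (Set.mem_univ j)).2
    calc ∑ j, x j ≤ ∑ j, ((k j : ℝ) + 1) / M := Finset.sum_le_sum fun j _ => hsum j
    _ = ((∑ j, (k j:ℝ)) + n) / M := by
        rw [← Finset.sum_div, Finset.sum_add_distrib]
        simp
    _ ≤ ((M : ℝ) + n) / M := by
        have hs : (∑ j, (k j:ℝ)) ≤ (M:ℝ) := by
          have := hk.2
          exact_mod_cast (by exact_mod_cast this : ((∑ j, k j : ℕ):ℝ) ≤ (M:ℝ))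
        gcongr
    _ = 1 + (n : ℝ) / M := by field_simp

private lemma simp0_smul (n : ℕ) {s : ℝ} (hs : 0 < s) : simp0 n s = s • simp0 n 1 := by
  ext x
  rw [mem_smul_set_iff_inv_smul_mem₀ (ne_of_gt hs)]
  constructor
  · rintro ⟨h0, h1⟩
    refine ⟨fun j => ?_, ?_⟩
    · simp only [Pi.smul_apply, smul_eq_mul]
      exact mul_nonneg (inv_nonneg.mpr hs.le) (h0 j)
    · simp only [Pi.smul_apply, smul_eq_mul, ← Finset.mul_sum]
      rw [inv_mul_le_iff₀ hs, mul_one]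
      exact h1
  · rintro ⟨h0, h1⟩
    refine ⟨fun j => ?_, ?_⟩
    · have := h0 j
      simp only [Pi.smul_apply, smul_eq_mul] at this
      nlinarith [inv_pos.mpr hs]
    · have : ∑ j, s⁻¹ * x j ≤ 1 := by simpa [Pi.smul_apply, smul_eq_mul] using h1
      rw [← Finset.mul_sum, inv_mul_le_iff₀ hs, mul_one] at this
      exact this

private lemma simp0_vol_le_one (n : ℕ) : volume (simp0 n 1) ≤ 1 := by
  have h : simp0 n 1 ⊆ Set.univ.pi fun _ : Fin n => Set.Icc (0:ℝ) 1 := by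
    intro x ⟨h0, h1⟩ j _
    refine ⟨h0 j, ?_⟩
    calc x j ≤ ∑ i, x i := Finset.single_le_sum (fun i _ => h0 i) (Finset.mem_univ j)
    _ ≤ 1 := h1
  calc volume (simp0 n 1) ≤ volume (Set.univ.pi fun _ : Fin n => Set.Icc (0:ℝ) 1) :=
        measure_mono h
  _ = 1 := by
        rw [volume_pi_pi]
        simp [Real.volume_Icc]

private lemma simp0_diff_vol (n : ℕ) {s : ℝ} (hs : 1 ≤ s) :
    (volume (simp0 n s \ simp0 n 1)).toReal ≤ s ^ n - 1 := by
  have hs0 : (0:ℝ) < s := by linarith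
  have hsub : simp0 n 1 ⊆ simp0 n s := fun x ⟨h0, h1⟩ => ⟨h0, le_trans h1 hs⟩
  have hvs : volume (simp0 n s) = ENNReal.ofReal (s ^ n) * volume (simp0 n 1) := by
    rw [simp0_smul n hs0, Measure.addHaar_smul_of_nonneg volume (le_of_lt hs0)]
    congr 1
    rw [Module.finrank_pi]
    simp
  have hfin1 : volume (simp0 n 1) ≠ ⊤ :=
    ne_top_of_le_ne_top (by norm_num) (simp0_vol_le_one n)
  have hfins : volume (simp0 n s) ≠ ⊤ := by
    rw [hvs]
    exact ENNReal.mul_ne_top ENNReal.ofReal_ne_top hfin1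
  rw [measure_diff hsub (measurable_simp0 n 1).nullMeasurableSet hfin1]
  rw [ENNReal.toReal_sub_of_le (measure_mono hsub) hfins, hvs, ENNReal.toReal_mul,
    ENNReal.toReal_ofReal (by positivity)]
  have h1 : (volume (simp0 n 1)).toReal ≤ 1 := by
    have := ENNReal.toReal_mono (by norm_num) (simp0_vol_le_one n)
    simpa using this
  have h0 : (0:ℝ) ≤ (volume (simp0 n 1)).toReal := ENNReal.toReal_nonneg
  have hsn : 1 ≤ s ^ n := one_le_pow₀ hs
  nlinarith

private lemma exp_sub_one_le {y : ℝ} (hy : 0 ≤ y) : Real.exp y - 1 ≤ y * Real.exp y := by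
  have h := Real.add_one_le_exp (-y)
  have hp := Real.exp_pos y
  have hm : Real.exp (-y) * Real.exp y = 1 := by
    rw [← Real.exp_add]; simp
  nlinarith

private lemma one_sub_exp_neg_le {y : ℝ} (hy : 0 ≤ y) : 1 - Real.exp (-y) ≤ y := by
  have h := Real.add_one_le_exp (-y)
  linarith

private lemma psi_integrable (w : ℝ) (b : ℝ) :
    IntegrableOn (fun t => Real.exp (t * w)) (Set.Ico (0:ℝ) b) := by
  apply IntegrableOn.mono_set (t := Set.Icc (0:ℝ) b)
  · exact (Continuous.continuousOn (by continuity)).integrableOn_compact isCompact_Icc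
  · exact Set.Ico_subset_Icc_self

private lemma psi_bounds {M : ℕ} (hM : 1 ≤ M) (w : ℝ) :
    Real.exp (-(|w| / M)) * (1 / M) ≤ (∫ t in Set.Ico (0:ℝ) (1 / M), Real.exp (t * w))
    ∧ (∫ t in Set.Ico (0:ℝ) (1 / M), Real.exp (t * w)) ≤ Real.exp (|w| / M) * (1 / M) := by
  have hM0 : (0:ℝ) < M := by exact_mod_cast hM
  have hvol : (volume (Set.Ico (0:ℝ) (1 / M))).toReal = 1 / M := by
    rw [Real.volume_Ico, ENNReal.toReal_ofReal (by rw [sub_zero]; positivity)]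
    ring
  have hpt : ∀ t ∈ Set.Ico (0:ℝ) (1 / M), Real.exp (t * w) ≤ Real.exp (|w| / M) := by
    intro t ht
    apply Real.exp_le_exp.mpr
    calc t * w ≤ |t * w| := le_abs_self _
    _ = |t| * |w| := abs_mul t w
    _ = t * |w| := by rw [abs_of_nonneg ht.1]
    _ ≤ (1 / M) * |w| := by
        apply mul_le_mul_of_nonneg_right (le_of_lt ht.2) (abs_nonneg w)
    _ = |w| / M := by ring
  have hpt' : ∀ t ∈ Set.Ico (0:ℝ) (1 / M), Real.exp (-(|w| / M)) ≤ Real.exp (t * w) := by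
    intro t ht
    apply Real.exp_le_exp.mpr
    have : -(t * w) ≤ |w| / M := by
      calc -(t * w) ≤ |t * w| := neg_le_abs _
      _ = |t| * |w| := abs_mul t w
      _ = t * |w| := by rw [abs_of_nonneg ht.1]
      _ ≤ (1 / M) * |w| := mul_le_mul_of_nonneg_right (le_of_lt ht.2) (abs_nonneg w)
      _ = |w| / M := by ring
    linarith
  constructor
  · have := setIntegral_mono_on (integrableOn_const (by rw [Real.volume_Ico]; exact ENNReal.ofReal_ne_top))
      (psi_integrable w (1 / M)) measurableSet_Ico hpt'
    rwa [setIntegral_const, measureReal_def, hvol, smul_eq_mul, mul_comm] at this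
  · have := setIntegral_mono_on (psi_integrable w (1 / M))
      (integrableOn_const (by rw [Real.volume_Ico]; exact ENNReal.ofReal_ne_top))
      measurableSet_Ico hpt
    rwa [setIntegral_const, measureReal_def, hvol, smul_eq_mul, mul_comm] at this

private lemma P_bounds {n : ℕ} (u : Fin n → ℝ) {M : ℕ} (hM : 1 ≤ M) :
    |1 - ∏ j, ((M:ℝ) * ∫ t in Set.Ico (0:ℝ) (1 / M), Real.exp (t * u j))|
      ≤ (∑ j, |u j|) * Real.exp (∑ j, |u j|) / M := by
  have hM0 : (0:ℝ) < M := by exact_mod_cast hM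
  set A := ∑ j, |u j| with hA
  have hA0 : 0 ≤ A := Finset.sum_nonneg fun j _ => abs_nonneg _
  set P := ∏ j, ((M:ℝ) * ∫ t in Set.Ico (0:ℝ) (1 / M), Real.exp (t * u j)) with hP
  have hup : P ≤ Real.exp (A / M) := by
    calc P ≤ ∏ j, Real.exp (|u j| / M) := by
          apply Finset.prod_le_prod
          · intro j _
            have := (psi_bounds hM (u j)).1
            have he : 0 < Real.exp (-(|u j| / M)) * (1 / M) := by positivity
            nlinarith
          · intro j _
            have := (psi_bounds hM (u j)).2
            calc (M:ℝ) * ∫ t in Set.Ico (0:ℝ) (1 / M), Real.exp (t * u j)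
                ≤ (M:ℝ) * (Real.exp (|u j| / M) * (1 / M)) := by nlinarith
            _ = Real.exp (|u j| / M) := by field_simp
    _ = Real.exp (∑ j, |u j| / M) := (Real.exp_sum _ _).symm
    _ = Real.exp (A / M) := by rw [hA, Finset.sum_div]
  have hlo : Real.exp (-(A / M)) ≤ P := by
    calc Real.exp (-(A / M)) = Real.exp (∑ j, -(|u j| / M)) := by
          rw [hA, Finset.sum_div] at *
          rw [← Finset.sum_neg_distrib]
    _ = ∏ j, Real.exp (-(|u j| / M)) := Real.exp_sum _ _
    _ ≤ P := by
          apply Finset.prod_le_prod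
          · intro j _; positivity
          · intro j _
            have := (psi_bounds hM (u j)).1
            calc Real.exp (-(|u j| / M)) = (M:ℝ) * (Real.exp (-(|u j| / M)) * (1 / M)) := by
                  field_simp
            _ ≤ (M:ℝ) * ∫ t in Set.Ico (0:ℝ) (1 / M), Real.exp (t * u j) := by nlinarith
  have hM1 : (1:ℝ) ≤ M := by exact_mod_cast hM
  have hAM : A / M ≤ A := div_le_self hA0 hM1
  rw [abs_sub_le_iff]
  constructor
  · -- 1 - P ≤ A e^A / M
    have h1 : 1 - Real.exp (-(A / M)) ≤ A / M := one_sub_exp_neg_le (div_nonneg hA0 hM0.le)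
    have : A / M ≤ A * Real.exp A / M := by
      have he := Real.one_le_exp hA0
      rw [div_le_div_iff₀ hM0 hM0]
      nlinarith [mul_nonneg (mul_nonneg hA0 hM0.le) (sub_nonneg.mpr he)]
    linarith
  · -- P - 1 ≤ A e^A / M
    have h1 : Real.exp (A / M) - 1 ≤ (A / M) * Real.exp (A / M) :=
      exp_sub_one_le (div_nonneg hA0 hM0.le)
    have h2 : Real.exp (A / M) ≤ Real.exp A := Real.exp_le_exp.mpr hAM
    have : (A / M) * Real.exp (A / M) ≤ A * Real.exp A / M := by
      rw [div_mul_eq_mul_div, div_le_div_iff₀ hM0 hM0]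
      nlinarith [mul_nonneg (mul_nonneg hA0 hM0.le) (sub_nonneg.mpr h2)]
    linarith

private theorem key (m : ℕ) (u : Fin (m + 1) → ℝ) :
    ∃ C : ℝ, 0 ≤ C ∧ ∀ M : ℕ, 1 ≤ M →
      |(∑ k ∈ Tset (m + 1) M, gfun u (fun j => (k j : ℝ) / M))
          - (M : ℝ) ^ (m + 1) * ∫ x in simp0 (m + 1) 1, gfun u x|
        ≤ C * (M : ℝ) ^ m := by
  classical
  revert u
  generalize hgen : m + 1 = n
  intro u
  set A := ∑ j, |u j| with hA
  have hA0 : 0 ≤ A := Finset.sum_nonneg fun j _ => abs_nonneg _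
  set B := Real.exp ((1 + n) * A) with hB
  have hB0 : 0 < B := Real.exp_pos _
  refine ⟨A * Real.exp A * B * 2 ^ n + B * ((n : ℝ) ^ 2 * Real.exp ((n : ℝ) ^ 2)), by positivity,
    fun M hM => ?_⟩
  have hM0 : (0 : ℝ) < M := by exact_mod_cast hM
  have hM1 : (1 : ℝ) ≤ M := by exact_mod_cast hM
  -- the compact set K
  set K : Set (Fin n → ℝ) := Set.univ.pi fun _ => Set.Icc (0 : ℝ) (1 + n) with hK
  have hKcomp : IsCompact K := isCompact_univ_pi fun _ => isCompact_Icc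
  have hgK : ∀ x ∈ K, |gfun u x| ≤ B := by
    intro x hx
    rw [gfun, abs_of_pos (Real.exp_pos _), hB]
    apply Real.exp_le_exp.mpr
    calc ∑ j, x j * u j ≤ ∑ j, (1 + n) * |u j| := by
          apply Finset.sum_le_sum
          intro j _
          have h1 := (hx j (Set.mem_univ j)).1
          have h2 := (hx j (Set.mem_univ j)).2
          calc x j * u j ≤ |x j * u j| := le_abs_self _
          _ = |x j| * |u j| := abs_mul _ _
          _ = x j * |u j| := by rw [abs_of_nonneg h1]
          _ ≤ (1 + n) * |u j| := mul_le_mul_of_nonneg_right h2 (abs_nonneg _)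
    _ = (1 + n) * A := by rw [hA, Finset.mul_sum]
  have hintK : IntegrableOn (gfun u) K := by
    exact ((gfun_cont u).continuousOn).integrableOn_compact hKcomp
  have hn1 : (1 : ℝ) ≤ n := by
    have : 1 ≤ n := by omega
    exact_mod_cast this
  -- boxes are inside K
  have hboxK : ∀ k ∈ Tset n M, boxk M k ⊆ K := by
    intro k hk x hx j _
    rw [Tset, Finset.mem_filter, Fintype.mem_piFinset] at hk
    have hkj : k j ≤ M := by have := hk.1 j; rw [Finset.mem_range] at this; omega
    have h1 := (hx j (Set.mem_univ j)).1
    have h2 := (hx j (Set.mem_univ j)).2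
    constructor
    · have : (0:ℝ) ≤ (k j : ℝ) / M := by positivity
      linarith
    · have hkr : ((k j : ℝ) + 1) ≤ (M : ℝ) + 1 := by
        have : ((k j : ℝ)) ≤ (M : ℝ) := by exact_mod_cast hkj
        linarith
      have : ((k j : ℝ) + 1) / M ≤ ((M : ℝ) + 1) / M := by gcongr
      have h3 : ((M : ℝ) + 1) / M ≤ 2 := by
        rw [div_le_iff₀ hM0]; linarith
      have : x j < 2 := by linarith [h2]
      linarith
  have hUK : (⋃ k ∈ Tset n M, boxk M k) ⊆ K := Set.iUnion₂_subset hboxK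
  have hΔK : simp0 n 1 ⊆ K := by
    intro x ⟨h0, h1⟩ j _
    refine ⟨h0 j, ?_⟩
    have : x j ≤ 1 :=
      le_trans (Finset.single_le_sum (fun i _ => h0 i) (Finset.mem_univ j)) h1
    linarith
  have hSK : simp0 n (1 + n / M) ⊆ K := by
    intro x ⟨h0, h1⟩ j _
    refine ⟨h0 j, ?_⟩
    have hxj : x j ≤ 1 + n / M :=
      le_trans (Finset.single_le_sum (fun i _ => h0 i) (Finset.mem_univ j)) h1
    have : (n : ℝ) / M ≤ n := div_le_self (by positivity) hM1
    linarith
  have hUint : IntegrableOn (gfun u) (⋃ k ∈ Tset n M, boxk M k) := hintK.mono_set hUK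
  -- notation
  set S := ∑ k ∈ Tset n M, gfun u (fun j => (k j : ℝ) / M) with hS
  set P := ∏ j, ((M : ℝ) * ∫ t in Set.Ico (0 : ℝ) (1 / M), Real.exp (t * u j)) with hP
  -- E1 : M^n * ∫_U g = P * S
  have hUeq : ∫ x in (⋃ k ∈ Tset n M, boxk M k), gfun u x
      = (∏ j, ∫ t in Set.Ico (0 : ℝ) (1 / M), Real.exp (t * u j)) * S := by
    rw [integral_biUnion_finset (Tset n M) (fun k _ => measurable_boxk M k)
      (boxk_disjoint hM) (fun k hk => hintK.mono_set (hboxK k hk))]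
    rw [hS, Finset.mul_sum]
    apply Finset.sum_congr rfl
    intro k _
    rw [box_integral u hM k]
    ring
  have hE1 : (M : ℝ) ^ n * ∫ x in (⋃ k ∈ Tset n M, boxk M k), gfun u x = P * S := by
    rw [hUeq, hP]
    rw [Finset.prod_mul_distrib, Finset.prod_const]
    simp only [Finset.card_univ, Fintype.card_fin]
    ring
  -- E2 : split the integral
  have hsplit : ∫ x in (⋃ k ∈ Tset n M, boxk M k) \ simp0 n 1, gfun u x
      = (∫ x in (⋃ k ∈ Tset n M, boxk M k), gfun u x) - ∫ x in simp0 n 1, gfun u x :=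
    integral_diff (measurable_simp0 n 1) hUint (simplex_subset_union hM)
  -- bound on S
  have hSbound : |S| ≤ B * 2 ^ n * (M : ℝ) ^ n := by
    have h1 : |S| ≤ ∑ k ∈ Tset n M, |gfun u (fun j => (k j : ℝ) / M)| :=
      Finset.abs_sum_le_sum_abs _ _
    have h2 : ∀ k ∈ Tset n M, |gfun u (fun j => (k j : ℝ) / M)| ≤ B := by
      intro k hk
      apply hgK
      intro j _
      rw [Tset, Finset.mem_filter, Fintype.mem_piFinset] at hk
      have hkj : k j ≤ M := by have := hk.1 j; rw [Finset.mem_range] at this; omega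
      have hkr : ((k j : ℝ)) ≤ (M : ℝ) := by exact_mod_cast hkj
      constructor
      · positivity
      · have : (k j : ℝ) / M ≤ 1 := by rw [div_le_one hM0]; exact hkr
        linarith
    have h3 : ((Tset n M).card : ℝ) ≤ (2 : ℝ) ^ n * (M : ℝ) ^ n := by
      have hc : (Tset n M).card ≤ (M + 1) ^ n := by
        calc (Tset n M).card ≤ (Fintype.piFinset fun _ : Fin n => Finset.range (M + 1)).card :=
              Finset.card_filter_le _ _
        _ = (M + 1) ^ n := by
            rw [Fintype.card_piFinset]
            simp
      calc ((Tset n M).card : ℝ) ≤ ((M + 1 : ℕ) : ℝ) ^ n := by exact_mod_cast hc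
      _ ≤ (2 * (M : ℝ)) ^ n := by
          apply pow_le_pow_left₀ (by positivity)
          push_cast
          linarith
      _ = (2 : ℝ) ^ n * (M : ℝ) ^ n := mul_pow _ _ _
    calc |S| ≤ ∑ k ∈ Tset n M, |gfun u (fun j => (k j : ℝ) / M)| := h1
    _ ≤ ((Tset n M).card : ℝ) * B := by
        have := Finset.sum_le_card_nsmul (Tset n M) _ B h2
        rwa [nsmul_eq_mul] at this
    _ ≤ (2 : ℝ) ^ n * (M : ℝ) ^ n * B := by
        apply mul_le_mul_of_nonneg_right h3 hB0.le
    _ = B * 2 ^ n * (M : ℝ) ^ n := by ring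
  -- bound on the residual integral
  have hKfin : volume K ≠ ⊤ := hKcomp.measure_lt_top.ne
  have hDfin : volume (simp0 n (1 + (n : ℝ) / M) \ simp0 n 1) ≠ ⊤ :=
    ne_top_of_le_ne_top hKfin (measure_mono fun x hx => hSK hx.1)
  have hUDsub : (⋃ k ∈ Tset n M, boxk M k) \ simp0 n 1
      ⊆ simp0 n (1 + (n : ℝ) / M) \ simp0 n 1 :=
    fun x hx => ⟨union_sub hM hx.1, hx.2⟩
  have hvolUD : (volume ((⋃ k ∈ Tset n M, boxk M k) \ simp0 n 1)).toReal
      ≤ (n : ℝ) ^ 2 * Real.exp ((n : ℝ) ^ 2) / M := by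
    have h1 : (volume ((⋃ k ∈ Tset n M, boxk M k) \ simp0 n 1)).toReal
        ≤ (volume (simp0 n (1 + (n : ℝ) / M) \ simp0 n 1)).toReal :=
      ENNReal.toReal_mono hDfin (measure_mono hUDsub)
    have h2 := simp0_diff_vol n (s := 1 + (n : ℝ) / M)
      (le_add_of_nonneg_right (by positivity))
    have h3 : (1 + (n : ℝ) / M) ^ n - 1 ≤ (n : ℝ) ^ 2 * Real.exp ((n : ℝ) ^ 2) / M := by
      have hq : (0:ℝ) ≤ (n : ℝ) / M := by positivity
      have e1 : (1 + (n : ℝ) / M) ^ n ≤ Real.exp ((n : ℝ) * ((n : ℝ) / M)) := by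
        calc (1 + (n : ℝ) / M) ^ n ≤ (Real.exp ((n : ℝ) / M)) ^ n := by
              apply pow_le_pow_left₀ (by positivity)
              linarith [Real.add_one_le_exp ((n : ℝ) / M)]
        _ = Real.exp ((n : ℝ) * ((n : ℝ) / M)) := by
            rw [← Real.exp_nat_mul]
      have e2 : (n : ℝ) * ((n : ℝ) / M) = (n : ℝ) ^ 2 / M := by ring
      have e3 : Real.exp ((n : ℝ) ^ 2 / M) - 1 ≤ ((n : ℝ) ^ 2 / M) * Real.exp ((n : ℝ) ^ 2 / M) :=
        exp_sub_one_le (by positivity)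
      have e4 : Real.exp ((n : ℝ) ^ 2 / M) ≤ Real.exp ((n : ℝ) ^ 2) :=
        Real.exp_le_exp.mpr (div_le_self (by positivity) hM1)
      have e5 : ((n : ℝ) ^ 2 / M) * Real.exp ((n : ℝ) ^ 2 / M)
          ≤ (n : ℝ) ^ 2 * Real.exp ((n : ℝ) ^ 2) / M := by
        rw [div_mul_eq_mul_div, div_le_div_iff₀ hM0 hM0]
        nlinarith [mul_nonneg (mul_nonneg (by positivity : (0:ℝ) ≤ (n:ℝ)^2) hM0.le)
          (sub_nonneg.mpr e4)]
      rw [e2] at e1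
      linarith
    linarith
  have hIbound : |∫ x in (⋃ k ∈ Tset n M, boxk M k) \ simp0 n 1, gfun u x|
      ≤ B * ((n : ℝ) ^ 2 * Real.exp ((n : ℝ) ^ 2) / M) := by
    have := norm_setIntegral_le_of_norm_le_const (μ := volume)
      (s := (⋃ k ∈ Tset n M, boxk M k) \ simp0 n 1) (f := gfun u) (C := B)
      (lt_of_le_of_lt (measure_mono fun x hx => hUK hx.1) hKcomp.measure_lt_top)
      (fun x hx => by
        rw [Real.norm_eq_abs]
        exact hgK x (hUK hx.1))
    rw [Real.norm_eq_abs] at this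
    calc |∫ x in (⋃ k ∈ Tset n M, boxk M k) \ simp0 n 1, gfun u x|
        ≤ B * (volume ((⋃ k ∈ Tset n M, boxk M k) \ simp0 n 1)).toReal := this
    _ ≤ B * ((n : ℝ) ^ 2 * Real.exp ((n : ℝ) ^ 2) / M) :=
        mul_le_mul_of_nonneg_left hvolUD hB0.le
  -- put it together
  have hPb := P_bounds u hM
  rw [← hA, ← hP] at hPb
  have main : S - (M : ℝ) ^ n * ∫ x in simp0 n 1, gfun u x
      = (1 - P) * S + (M : ℝ) ^ n * ∫ x in (⋃ k ∈ Tset n M, boxk M k) \ simp0 n 1, gfun u x := by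
    have : (M : ℝ) ^ n * ∫ x in simp0 n 1, gfun u x
        = P * S - (M : ℝ) ^ n * ∫ x in (⋃ k ∈ Tset n M, boxk M k) \ simp0 n 1, gfun u x := by
      rw [hsplit, ← hE1]
      ring
    rw [this]
    ring
  rw [main]
  have habs : |(1 - P) * S + (M : ℝ) ^ n
        * ∫ x in (⋃ k ∈ Tset n M, boxk M k) \ simp0 n 1, gfun u x|
      ≤ |1 - P| * |S| + (M : ℝ) ^ n
        * |∫ x in (⋃ k ∈ Tset n M, boxk M k) \ simp0 n 1, gfun u x| := by
    calc _ ≤ |(1 - P) * S| + |(M : ℝ) ^ n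
          * ∫ x in (⋃ k ∈ Tset n M, boxk M k) \ simp0 n 1, gfun u x| := abs_add_le _ _
    _ = |1 - P| * |S| + (M : ℝ) ^ n
          * |∫ x in (⋃ k ∈ Tset n M, boxk M k) \ simp0 n 1, gfun u x| := by
        rw [abs_mul, abs_mul, abs_of_pos (by positivity : (0:ℝ) < (M : ℝ) ^ n)]
  have hMn : (M : ℝ) ^ n = (M : ℝ) ^ m * M := by
    rw [← hgen, pow_succ]
  have t1 : |1 - P| * |S| ≤ A * Real.exp A * B * 2 ^ n * (M : ℝ) ^ m := by
    calc |1 - P| * |S| ≤ (A * Real.exp A / M) * (B * 2 ^ n * (M : ℝ) ^ n) := by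
          apply mul_le_mul hPb hSbound (abs_nonneg _) (by positivity)
    _ = A * Real.exp A * B * 2 ^ n * (M : ℝ) ^ m := by
        rw [hMn]
        field_simp
  have t2 : (M : ℝ) ^ n * |∫ x in (⋃ k ∈ Tset n M, boxk M k) \ simp0 n 1, gfun u x|
      ≤ B * ((n : ℝ) ^ 2 * Real.exp ((n : ℝ) ^ 2)) * (M : ℝ) ^ m := by
    calc (M : ℝ) ^ n * |∫ x in (⋃ k ∈ Tset n M, boxk M k) \ simp0 n 1, gfun u x|
        ≤ (M : ℝ) ^ n * (B * ((n : ℝ) ^ 2 * Real.exp ((n : ℝ) ^ 2) / M)) :=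
          mul_le_mul_of_nonneg_left hIbound (by positivity)
    _ = B * ((n : ℝ) ^ 2 * Real.exp ((n : ℝ) ^ 2)) * (M : ℝ) ^ m := by
        rw [hMn]
        field_simp
  calc |(1 - P) * S + (M : ℝ) ^ n
        * ∫ x in (⋃ k ∈ Tset n M, boxk M k) \ simp0 n 1, gfun u x|
      ≤ |1 - P| * |S| + (M : ℝ) ^ n
        * |∫ x in (⋃ k ∈ Tset n M, boxk M k) \ simp0 n 1, gfun u x| := habs
  _ ≤ A * Real.exp A * B * 2 ^ n * (M : ℝ) ^ m
      + B * ((n : ℝ) ^ 2 * Real.exp ((n : ℝ) ^ 2)) * (M : ℝ) ^ m := add_le_add t1 t2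
  _ = (A * Real.exp A * B * 2 ^ n + B * ((n : ℝ) ^ 2 * Real.exp ((n : ℝ) ^ 2))) * (M : ℝ) ^ m := by
      ring

private lemma sum_reindex (m : ℕ) (v : Fin (m + 2) → ℝ) {M : ℕ} (hM : 1 ≤ M) :
    (∑ t ∈ Finset.Nat.antidiagonalTuple (m + 2) M,
        Real.exp ((1 / (M : ℝ)) * ∑ j, (t j : ℝ) * v j))
      = Real.exp (v (Fin.last (m + 1)))
        * ∑ k ∈ Tset (m + 1) M,
            gfun (fun j => v (Fin.castSucc j) - v (Fin.last (m + 1)))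
              (fun j => (k j : ℝ) / M) := by
  have hM0 : (0 : ℝ) < M := by exact_mod_cast hM
  set c := v (Fin.last (m + 1)) with hc
  rw [Finset.mul_sum]
  refine Finset.sum_nbij' (fun t => fun j => t (Fin.castSucc j))
    (fun k => Fin.snoc k (M - ∑ j, k j)) ?_ ?_ ?_ ?_ ?_
  · intro t ht
    rw [Finset.Nat.mem_antidiagonalTuple] at ht
    have hsum : ∑ j : Fin (m + 1), t (Fin.castSucc j) + t (Fin.last (m + 1)) = M := by
      rw [← Fin.sum_univ_castSucc]; exact ht
    rw [Tset, Finset.mem_filter, Fintype.mem_piFinset]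
    constructor
    · intro j
      rw [Finset.mem_range]
      have h1 : t (Fin.castSucc j) ≤ ∑ i, t i :=
        Finset.single_le_sum (fun i _ => Nat.zero_le _) (Finset.mem_univ _)
      omega
    · have e : ∑ j : Fin (m + 1), (fun (j : Fin (m + 1)) => t (Fin.castSucc j)) j
          = ∑ j : Fin (m + 1), t (Fin.castSucc j) := rfl
      omega
  · intro k hk
    rw [Tset, Finset.mem_filter] at hk
    rw [Finset.Nat.mem_antidiagonalTuple, Fin.sum_univ_castSucc]
    simp only [Fin.snoc_castSucc, Fin.snoc_last]
    omega
  · intro t ht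
    rw [Finset.Nat.mem_antidiagonalTuple] at ht
    have hsum : ∑ j : Fin (m + 1), t (Fin.castSucc j) + t (Fin.last (m + 1)) = M := by
      rw [← Fin.sum_univ_castSucc]; exact ht
    funext j
    simp only []
    refine Fin.lastCases ?_ (fun i => ?_) j
    · rw [Fin.snoc_last]; omega
    · rw [Fin.snoc_castSucc]
  · intro k _
    funext j
    rw [Fin.snoc_castSucc]
  · intro t ht
    simp only []
    rw [Finset.Nat.mem_antidiagonalTuple] at ht
    have hsum : ∑ j : Fin (m + 1), t (Fin.castSucc j) + t (Fin.last (m + 1)) = M := by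
      rw [← Fin.sum_univ_castSucc]; exact ht
    rw [gfun, ← Real.exp_add]
    congr 1
    have hT : ((t (Fin.last (m + 1)) : ℝ))
        = (M : ℝ) - ∑ j : Fin (m + 1), (t (Fin.castSucc j) : ℝ) := by
      have h3 : ((∑ j : Fin (m + 1), t (Fin.castSucc j) : ℕ) : ℝ) + (t (Fin.last (m + 1)) : ℝ)
          = (M : ℝ) := by exact_mod_cast congrArg (Nat.cast (R := ℝ)) hsum
      push_cast at h3
      linarith
    rw [Fin.sum_univ_castSucc (f := fun j => (t j : ℝ) * v j), hT]
    have hrhs : ∑ j : Fin (m + 1), (t (Fin.castSucc j) : ℝ) / M * (v (Fin.castSucc j) - c)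
        = ((∑ j : Fin (m + 1), (t (Fin.castSucc j) : ℝ) * v (Fin.castSucc j))
            - (∑ j : Fin (m + 1), (t (Fin.castSucc j) : ℝ)) * c) / M := by
      calc ∑ j : Fin (m + 1), (t (Fin.castSucc j) : ℝ) / M * (v (Fin.castSucc j) - c)
          = ∑ j : Fin (m + 1),
              ((t (Fin.castSucc j) : ℝ) * v (Fin.castSucc j) - (t (Fin.castSucc j) : ℝ) * c) / M :=
            Finset.sum_congr rfl fun j _ => by ring
      _ = (∑ j : Fin (m + 1),
              ((t (Fin.castSucc j) : ℝ) * v (Fin.castSucc j) - (t (Fin.castSucc j) : ℝ) * c)) / M :=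
            (Finset.sum_div _ _ _).symm
      _ = _ := by rw [Finset.sum_sub_distrib, ← Finset.sum_mul]
    rw [hrhs]
    field_simp
    ring

private lemma integrand_eq (m : ℕ) (v : Fin (m + 2) → ℝ) (x : Fin (m + 1) → ℝ) :
    Real.exp ((∑ j, x j * v (Fin.castSucc j)) + (1 - ∑ j, x j) * v (Fin.last (m + 1)))
      = Real.exp (v (Fin.last (m + 1)))
        * gfun (fun j => v (Fin.castSucc j) - v (Fin.last (m + 1))) x := by
  rw [gfun, ← Real.exp_add]
  congr 1
  have h : ∑ j, x j * (v (Fin.castSucc j) - v (Fin.last (m + 1)))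
      = (∑ j, x j * v (Fin.castSucc j)) - (∑ j, x j) * v (Fin.last (m + 1)) := by
    simp only [mul_sub]
    rw [Finset.sum_sub_distrib, ← Finset.sum_mul]
  rw [h]
  ring

theorem geometric_sum_asymptotics (d : ℕ) (hd : 2 ≤ d) (v : Fin d → ℝ) :
    ∃ C : ℝ, ∀ M : ℕ, 1 ≤ M →
      |(∑ t ∈ Finset.Nat.antidiagonalTuple d M,
            Real.exp ((1 / (M : ℝ)) * ∑ j, (t j : ℝ) * v j))
          - (M : ℝ) ^ (d - 1) *
              ∫ x in {x : Fin (d - 1) → ℝ | (∀ j, 0 ≤ x j) ∧ ∑ j, x j ≤ 1},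
                Real.exp ((∑ j, x j * v (Fin.castLE (Nat.sub_le d 1) j))
                  + (1 - ∑ j, x j) * v ⟨d - 1, by omega⟩)|
        ≤ C * (M : ℝ) ^ (d - 2) := by
  obtain ⟨m, rfl⟩ : ∃ m, d = m + 2 := ⟨d - 2, by omega⟩
  obtain ⟨C, hC0, hC⟩ := key m (fun j => v (Fin.castSucc j) - v (Fin.last (m + 1)))
  refine ⟨Real.exp (v (Fin.last (m + 1))) * C, fun M hM => ?_⟩
  have hs := sum_reindex m v hM
  have hI : (∫ x in {x : Fin (m + 2 - 1) → ℝ | (∀ j, 0 ≤ x j) ∧ ∑ j, x j ≤ 1},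
        Real.exp ((∑ j, x j * v (Fin.castLE (Nat.sub_le (m + 2) 1) j))
          + (1 - ∑ j, x j) * v ⟨m + 2 - 1, by omega⟩))
      = Real.exp (v (Fin.last (m + 1)))
        * ∫ x in simp0 (m + 1) 1,
            gfun (fun j => v (Fin.castSucc j) - v (Fin.last (m + 1))) x := by
    rw [← integral_const_mul]
    exact integral_congr_ae (Filter.Eventually.of_forall fun x => integrand_eq m v x)
  rw [hs, hI]
  have hfact : Real.exp (v (Fin.last (m + 1)))
        * (∑ k ∈ Tset (m + 1) M,
            gfun (fun j => v (Fin.castSucc j) - v (Fin.last (m + 1)))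
              (fun j => (k j : ℝ) / M))
      - (M : ℝ) ^ (m + 2 - 1) * (Real.exp (v (Fin.last (m + 1)))
        * ∫ x in simp0 (m + 1) 1,
            gfun (fun j => v (Fin.castSucc j) - v (Fin.last (m + 1))) x)
      = Real.exp (v (Fin.last (m + 1)))
        * ((∑ k ∈ Tset (m + 1) M,
            gfun (fun j => v (Fin.castSucc j) - v (Fin.last (m + 1)))
              (fun j => (k j : ℝ) / M))
          - (M : ℝ) ^ (m + 1) * ∫ x in simp0 (m + 1) 1,
              gfun (fun j => v (Fin.castSucc j) - v (Fin.last (m + 1))) x) := by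
    simp only [show m + 2 - 1 = m + 1 from rfl]
    ring
  rw [hfact, abs_mul, abs_of_pos (Real.exp_pos _)]
  calc Real.exp (v (Fin.last (m + 1)))
        * |(∑ k ∈ Tset (m + 1) M,
            gfun (fun j => v (Fin.castSucc j) - v (Fin.last (m + 1)))
              (fun j => (k j : ℝ) / M))
          - (M : ℝ) ^ (m + 1) * ∫ x in simp0 (m + 1) 1,
              gfun (fun j => v (Fin.castSucc j) - v (Fin.last (m + 1))) x|
      ≤ Real.exp (v (Fin.last (m + 1))) * (C * (M : ℝ) ^ m) :=
        mul_le_mul_of_nonneg_left (hC M hM) (Real.exp_pos _).le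
  _ = Real.exp (v (Fin.last (m + 1))) * C * (M : ℝ) ^ m := by ring
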